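/- Let D be a probability distribution on a countable set S and n ≥ 1. For a sample s = (s_1,…,s_n) drawn i.i.d. from D, let M(s) := D(S \ {s_1,…,s_n}) be the missing mass and GT(s) := (1/n)·|{i : s_i ≠ s_j for all j ≠ i}| the Good–Turing estimator. Then E[M(s)] ≤ E[GT(s)] ≤ E[M(s)] + 1/n. -/

import Mathlib

open Finset
open scoped Classical

/-- Expectation of `f` over `n` i.i.d. samples from `D`. -/
noncomputable def sampExp {S : Type*} [Countable S] (D : S → ℝ) (n : ℕ)
    (f : (Fin n → S) → ℝ) : ℝ :=
  ∑' s : Fin n → S, (∏ i, D (s i)) * f s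

/-- The missing mass of a sample: total `D`-probability of unseen elements. -/
noncomputable def missingMass {S : Type*} [Countable S] (D : S → ℝ) {n : ℕ}
    (s : Fin n → S) : ℝ :=
  ∑' x : S, if ∀ i, s i ≠ x then D x else 0

/-- The Good–Turing estimator: fraction of sample points appearing exactly once. -/
noncomputable def goodTuring {S : Type*} {n : ℕ} (s : Fin n → S) : ℝ :=
  ((Finset.univ.filter (fun i : Fin n => ∀ j, j ≠ i → s j ≠ s i)).card : ℝ) / n

section Aux
open scoped ENNReal

lemma aux_tsum_pi_fin {S : Type*} (g : S → ℝ≥0∞) : ∀ m, (∑' t : Fin m → S, ∏ j, g (t j)) = (∑' y, g y) ^ m := by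
  intro m
  induction m with
  | zero =>
      rw [pow_zero]
      have h : ∀ t : Fin 0 → S, (∏ j, g (t j)) = 1 := by
        intro t; simp
      rw [tsum_congr h]
      exact tsum_eq_single (fun i => i.elim0) (fun b hb => absurd (Subsingleton.elim b _) hb) |>.trans rfl
  | succ m ih =>
      rw [← Equiv.tsum_eq (Fin.consEquiv (fun _ : Fin (m+1) => S)) (fun t => ∏ j, g (t j))]
      rw [ENNReal.tsum_prod']
      have h : ∀ (x : S) (t : Fin m → S),
          (∏ j, g ((Fin.consEquiv (fun _ : Fin (m+1) => S)) (x, t) j)) = g x * ∏ j, g (t j) := by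
        intro x t
        simp [Fin.prod_univ_succ]
      calc (∑' (x : S) (t : Fin m → S), (∏ j, g ((Fin.consEquiv (fun _ : Fin (m+1) => S)) (x, t) j)))
          = ∑' (x : S), g x * ∑' t : Fin m → S, ∏ j, g (t j) := by
            refine tsum_congr fun x => ?_
            rw [← ENNReal.tsum_mul_left]
            exact tsum_congr fun t => h x t
        _ = (∑' y, g y) ^ (m+1) := by
            rw [ih, ENNReal.tsum_mul_right, pow_succ, mul_comm]

lemma aux_tsum_pi {S : Type*} (ι : Type*) [Fintype ι] (g : S → ℝ≥0∞) :
    (∑' t : ι → S, ∏ j, g (t j)) = (∑' y, g y) ^ Fintype.card ι := by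
  classical
  let e := Fintype.equivFin ι
  let E : (ι → S) ≃ (Fin (Fintype.card ι) → S) := Equiv.arrowCongr e (Equiv.refl S)
  rw [← Equiv.tsum_eq E.symm (fun t : ι → S => ∏ j, g (t j))]
  have h : ∀ u : Fin (Fintype.card ι) → S, (∏ j, g ((E.symm u) j)) = ∏ k, g (u k) := by
    intro u
    have : ∀ j : ι, E.symm u j = u (e j) := fun j => rfl
    simp only [this]
    exact Equiv.prod_comp e (fun k => g (u k))
  rw [tsum_congr h, aux_tsum_pi_fin]

lemma aux_tsum_pi_ite {S : Type*} (ι : Type*) [Fintype ι] (g : S → ℝ≥0∞) (x : S) :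
    (∑' t : ι → S, if ∀ j, t j ≠ x then ∏ j, g (t j) else 0)
      = (∑' y, if y ≠ x then g y else 0) ^ Fintype.card ι := by
  rw [← aux_tsum_pi]
  refine tsum_congr fun t => ?_
  by_cases h : ∀ j, t j ≠ x
  · rw [if_pos h]
    exact Finset.prod_congr rfl fun j _ => (if_pos (h j)).symm
  · rw [if_neg h]
    push_neg at h
    obtain ⟨j, hj⟩ := h
    exact (Finset.prod_eq_zero (mem_univ j) (by simp [hj])).symm

end Aux

open scoped ENNReal

theorem stmt15 {S : Type*} [Countable S] (D : S → ℝ)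
    (hD : ∀ x, 0 ≤ D x) (hsum : Summable D) (h1 : ∑' x, D x = 1)
    (n : ℕ) (hn : 1 ≤ n) :
    sampExp D n (missingMass D) ≤ sampExp D n (fun s => goodTuring s) ∧
    sampExp D n (fun s => goodTuring s) ≤ sampExp D n (missingMass D) + 1 / n := by
  set d : S → ℝ≥0∞ := fun x => ENNReal.ofReal (D x) with hd_def
  have hd1 : (∑' x, d x) = 1 := by
    rw [hd_def, ← ENNReal.ofReal_tsum_of_nonneg hD hsum, h1, ENNReal.ofReal_one]
  have hdle : ∀ x, d x ≤ 1 := by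
    intro x
    rw [← hd1]
    exact ENNReal.le_tsum x
  have hdt : ∀ x, d x ≠ ∞ := fun x => ENNReal.ofReal_ne_top
  set q : S → ℝ≥0∞ := fun x => 1 - d x with hq_def
  have hq : ∀ x, d x + q x = 1 := fun x => add_tsub_cancel_of_le (hdle x)
  have hq1 : ∀ x, q x ≤ 1 := fun x => tsub_le_self
  -- restricted sum
  have hrest : ∀ x : S, (∑' y, if y ≠ x then d y else 0) = q x := by
    intro x
    have hsplit : ∀ y, d y = (if y = x then d x else 0) + (if y ≠ x then d y else 0) := by
      intro y
      by_cases h : y = x <;> simp [h]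
    have h2 : (∑' y, d y) = d x + ∑' y, (if y ≠ x then d y else 0) := by
      rw [tsum_congr hsplit, ENNReal.tsum_add, tsum_ite_eq]
    rw [hd1] at h2
    exact ENNReal.eq_sub_of_add_eq (hdt x) (by rw [add_comm]; exact h2.symm)
  have hnR : (0:ℝ) < n := by exact_mod_cast hn
  have hn0 : (n:ℝ≥0∞) ≠ 0 := Nat.cast_ne_zero.mpr (by omega)
  -- transfer lemma
  have hkey : ∀ f : (Fin n → S) → ℝ, (∀ s, 0 ≤ f s) →
      sampExp D n f = (∑' s : Fin n → S, (∏ i, d (s i)) * ENNReal.ofReal (f s)).toReal := by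
    intro f hf
    have hp : ∀ s : Fin n → S,
        (∏ i, d (s i)) * ENNReal.ofReal (f s) = ENNReal.ofReal ((∏ i, D (s i)) * f s) := by
      intro s
      rw [← ENNReal.ofReal_prod_of_nonneg (fun i _ => hD _),
        ← ENNReal.ofReal_mul (Finset.prod_nonneg fun i _ => hD _)]
    calc sampExp D n f
        = ∑' s : Fin n → S, (ENNReal.ofReal ((∏ i, D (s i)) * f s)).toReal :=
          tsum_congr fun s => (ENNReal.toReal_ofReal
            (mul_nonneg (Finset.prod_nonneg fun i _ => hD _) (hf s))).symm
      _ = (∑' s : Fin n → S, ENNReal.ofReal ((∏ i, D (s i)) * f s)).toReal :=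
          (ENNReal.tsum_toReal_eq fun s => ENNReal.ofReal_ne_top).symm
      _ = (∑' s : Fin n → S, (∏ i, d (s i)) * ENNReal.ofReal (f s)).toReal := by
          rw [tsum_congr hp]
  -- expectation of missing mass
  have hM : (∑' s : Fin n → S, (∏ i, d (s i)) * ENNReal.ofReal (missingMass D s))
      = ∑' x, d x * q x ^ n := by
    have hsumM : ∀ s : Fin n → S, Summable (fun x => if ∀ i, s i ≠ x then D x else 0) := by
      intro s
      refine hsum.of_nonneg_of_le (fun x => ?_) (fun x => ?_)
      · split_ifs <;> simp [hD x]
      · split_ifs <;> simp [hD x]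
    have hofM : ∀ s : Fin n → S,
        ENNReal.ofReal (missingMass D s) = ∑' x, (if ∀ i, s i ≠ x then d x else 0) := by
      intro s
      rw [missingMass, ENNReal.ofReal_tsum_of_nonneg (fun x => by split_ifs <;> simp [hD x]) (hsumM s)]
      exact tsum_congr fun x => by split_ifs <;> simp [hd_def]
    calc (∑' s : Fin n → S, (∏ i, d (s i)) * ENNReal.ofReal (missingMass D s))
        = ∑' (s : Fin n → S) (x : S), (∏ i, d (s i)) * (if ∀ i, s i ≠ x then d x else 0) := by
          refine tsum_congr fun s => ?_
          rw [hofM s, ENNReal.tsum_mul_left]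
      _ = ∑' (x : S) (s : Fin n → S), (∏ i, d (s i)) * (if ∀ i, s i ≠ x then d x else 0) :=
          ENNReal.tsum_comm
      _ = ∑' x, d x * q x ^ n := by
          refine tsum_congr fun x => ?_
          have hpt : ∀ s : Fin n → S,
              (∏ i, d (s i)) * (if ∀ i, s i ≠ x then d x else 0)
                = d x * (if ∀ i, s i ≠ x then ∏ i, d (s i) else 0) := by
            intro s
            split_ifs <;> simp [mul_comm]
          have haux := aux_tsum_pi_ite (Fin n) d x
          rw [hrest x, Fintype.card_fin] at haux
          rw [tsum_congr hpt, ENNReal.tsum_mul_left]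
          congr 1
          convert haux using 2
          ext t
          congr 1
  -- expectation of Good-Turing
  have hcard : ∀ i : Fin n, Fintype.card {j : Fin n // j ≠ i} = n - 1 := by
    intro i
    rw [Fintype.card_subtype]
    rw [show (Finset.univ.filter fun j : Fin n => j ≠ i) = Finset.univ.erase i from ?_]
    · rw [Finset.card_erase_of_mem (mem_univ i), card_univ, Fintype.card_fin]
    · ext j; simp [Finset.mem_erase, and_comm]
  have hGT : (∑' s : Fin n → S, (∏ i, d (s i)) * ENNReal.ofReal (goodTuring s))
      = ∑' x, d x * q x ^ (n-1) := by
    have hofGT : ∀ s : Fin n → S,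
        ENNReal.ofReal (goodTuring s)
          = (∑ i : Fin n, if (∀ j, j ≠ i → s j ≠ s i) then (1:ℝ≥0∞) else 0) / n := by
      intro s
      rw [goodTuring, ENNReal.ofReal_div_of_pos hnR, ENNReal.ofReal_natCast n]
      congr 1
      rw [ENNReal.ofReal_natCast, Finset.card_filter]
      push_cast
      exact Finset.sum_congr rfl fun i _ => by split_ifs <;> simp
    have hper : ∀ i : Fin n,
        (∑' s : Fin n → S, if (∀ j, j ≠ i → s j ≠ s i) then (∏ k, d (s k)) else 0)
          = ∑' x, d x * q x ^ (n-1) := by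
      intro i
      set E := Equiv.funSplitAt i S with hE
      rw [← Equiv.tsum_eq E.symm
        (fun s : Fin n → S => if (∀ j, j ≠ i → s j ≠ s i) then (∏ k, d (s k)) else 0)]
      rw [ENNReal.tsum_prod']
      have hpt : ∀ (x : S) (t : {j : Fin n // j ≠ i} → S),
          (if (∀ j, j ≠ i → (E.symm (x,t)) j ≠ (E.symm (x,t)) i) then (∏ k, d ((E.symm (x,t)) k)) else 0)
            = d x * (if ∀ j : {j : Fin n // j ≠ i}, t j ≠ x
                then ∏ j : {j : Fin n // j ≠ i}, d (t j) else 0) := by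
        intro x t
        have hsx : E.symm (x, t) i = x := by simp [hE, Equiv.funSplitAt]
        have hst : ∀ (j : Fin n) (h : j ≠ i), E.symm (x, t) j = t ⟨j, h⟩ := by
          intro j h; simp [hE, Equiv.funSplitAt, h]
        have hcond : (∀ j, j ≠ i → (E.symm (x,t)) j ≠ (E.symm (x,t)) i)
            ↔ (∀ j : {j : Fin n // j ≠ i}, t j ≠ x) := by
          constructor
          · intro h j
            have := h j.1 j.2
            rwa [hst j.1 j.2, hsx] at this
          · intro h j hj
            rw [hst j hj, hsx]
            exact h ⟨j, hj⟩
        have hprod : (∏ k, d ((E.symm (x,t)) k))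
            = d x * ∏ j : {j : Fin n // j ≠ i}, d (t j) := by
          rw [← Finset.mul_prod_erase Finset.univ (fun k => d (E.symm (x,t) k)) (mem_univ i), hsx]
          congr 1
          rw [Finset.prod_subtype (Finset.univ.erase i) (p := fun j => j ≠ i)
            (fun j => by simp [Finset.mem_erase]) (fun k => d (E.symm (x,t) k))]
          exact Finset.prod_congr rfl fun j _ => by rw [hst j.1 j.2]
        split_ifs with h1 h2 h3
        · rw [hprod]
        · exact absurd (hcond.mp h1) h2
        · exact absurd (hcond.mpr h3) h1
        · simp
      calc (∑' (x : S) (t : {j : Fin n // j ≠ i} → S),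
            (if (∀ j, j ≠ i → (E.symm (x,t)) j ≠ (E.symm (x,t)) i)
              then (∏ k, d ((E.symm (x,t)) k)) else 0))
          = ∑' x : S, d x * (∑' t : {j : Fin n // j ≠ i} → S,
              if ∀ j : {j : Fin n // j ≠ i}, t j ≠ x
                then ∏ j : {j : Fin n // j ≠ i}, d (t j) else 0) := by
            refine tsum_congr fun x => ?_
            rw [← ENNReal.tsum_mul_left]
            exact tsum_congr fun t => hpt x t
        _ = ∑' x, d x * q x ^ (n-1) := by
            refine tsum_congr fun x => ?_
            rw [aux_tsum_pi_ite _ d x, hrest x, hcard i]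
    calc (∑' s : Fin n → S, (∏ i, d (s i)) * ENNReal.ofReal (goodTuring s))
        = (∑' s : Fin n → S, ∑ i : Fin n,
            if (∀ j, j ≠ i → s j ≠ s i) then (∏ k, d (s k)) else 0) / n := by
          rw [div_eq_mul_inv, ← ENNReal.tsum_mul_right]
          refine tsum_congr fun s => ?_
          rw [hofGT s, div_eq_mul_inv, ← mul_assoc]
          congr 1
          rw [Finset.mul_sum]
          exact Finset.sum_congr rfl fun i _ => by split_ifs <;> simp
      _ = (∑ i : Fin n, ∑' s : Fin n → S,
            if (∀ j, j ≠ i → s j ≠ s i) then (∏ k, d (s k)) else 0) / n := by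
          rw [Summable.tsum_finsetSum (fun i _ => ENNReal.summable)]
      _ = ((n : ℝ≥0∞) * ∑' x, d x * q x ^ (n-1)) / n := by
          rw [Finset.sum_congr rfl (fun i _ => hper i), Finset.sum_const, card_univ,
            Fintype.card_fin, nsmul_eq_mul]
      _ = ∑' x, d x * q x ^ (n-1) := by
          rw [mul_comm, mul_div_assoc, ENNReal.div_self hn0 (ENNReal.natCast_ne_top n), mul_one]
  -- bounds
  have hA_le_one : ∀ k : ℕ, (∑' x, d x * q x ^ k) ≤ 1 := by
    intro k
    calc (∑' x, d x * q x ^ k) ≤ ∑' x, d x := by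
          refine ENNReal.tsum_le_tsum fun x => ?_
          calc d x * q x ^ k ≤ d x * 1 := mul_le_mul_right (pow_le_one' (hq1 x) k) _
            _ = d x := mul_one _
      _ = 1 := hd1
  have hA_ne_top : ∀ k : ℕ, (∑' x, d x * q x ^ k) ≠ ∞ :=
    fun k => ne_top_of_le_ne_top ENNReal.one_ne_top (hA_le_one k)
  -- binomial bound
  have hbin : ∀ x, (n:ℝ≥0∞) * (d x * q x ^ (n-1)) ≤ 1 := by
    intro x
    have hc := add_pow (d x) (q x) n
    rw [hq x, one_pow] at hc
    have hmem : 1 ∈ Finset.range (n+1) := Finset.mem_range.mpr (by omega)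
    have hterm := Finset.single_le_sum
      (f := fun k => d x ^ k * q x ^ (n-k) * (n.choose k : ℝ≥0∞))
      (fun k _ => zero_le) hmem
    rw [← hc] at hterm
    calc (n:ℝ≥0∞) * (d x * q x ^ (n-1))
        = d x ^ 1 * q x ^ (n-1) * (n.choose 1 : ℝ≥0∞) := by
          rw [Nat.choose_one_right, pow_one]; push_cast; ring
      _ ≤ 1 := hterm
  have hB : (∑' x, d x * d x * q x ^ (n-1)) ≤ (n:ℝ≥0∞)⁻¹ := by
    rw [ENNReal.le_inv_iff_mul_le]
    calc (∑' x, d x * d x * q x ^ (n-1)) * n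
        = ∑' x, d x * ((n:ℝ≥0∞) * (d x * q x ^ (n-1))) := by
          rw [← ENNReal.tsum_mul_right]
          exact tsum_congr fun x => by ring
      _ ≤ ∑' x, d x * 1 := ENNReal.tsum_le_tsum fun x => mul_le_mul_right (hbin x) _
      _ = 1 := by simp [hd1]
  have hsplitA : (∑' x, d x * q x ^ (n-1))
      = (∑' x, d x * q x ^ n) + ∑' x, d x * d x * q x ^ (n-1) := by
    rw [← ENNReal.tsum_add]
    refine tsum_congr fun x => ?_
    have hqq : q x * q x ^ (n-1) = q x ^ n := by
      rw [← pow_succ']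
      congr 1
      omega
    calc d x * q x ^ (n-1) = d x * ((d x + q x) * q x ^ (n-1)) := by rw [hq x, one_mul]
      _ = d x * q x ^ n + d x * d x * q x ^ (n-1) := by rw [← hqq]; ring
  -- nonnegativity
  have hMnn : ∀ s : Fin n → S, 0 ≤ missingMass D s := by
    intro s
    refine tsum_nonneg fun x => ?_
    split_ifs <;> simp [hD x]
  have hGTnn : ∀ s : Fin n → S, 0 ≤ goodTuring s :=
    fun s => div_nonneg (Nat.cast_nonneg _) (Nat.cast_nonneg _)
  rw [hkey (missingMass D) hMnn, hkey (fun s => goodTuring s) hGTnn]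
  rw [show (∑' s : Fin n → S, (∏ i, d (s i)) * ENNReal.ofReal (missingMass D s))
      = ∑' x, d x * q x ^ n from hM]
  rw [show (∑' s : Fin n → S, (∏ i, d (s i)) * ENNReal.ofReal (goodTuring s))
      = ∑' x, d x * q x ^ (n-1) from hGT]
  constructor
  · refine ENNReal.toReal_mono (hA_ne_top (n-1)) (ENNReal.tsum_le_tsum fun x => ?_)
    exact mul_le_mul_right (pow_le_pow_of_le_one zero_le (hq1 x) (by omega)) _
  · have hle : (∑' x, d x * q x ^ (n-1)) ≤ (∑' x, d x * q x ^ n) + (n:ℝ≥0∞)⁻¹ := by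
      rw [hsplitA]
      exact add_le_add le_rfl hB
    have hinv_ne : ((n:ℝ≥0∞)⁻¹) ≠ ∞ := ENNReal.inv_ne_top.mpr hn0
    calc (∑' x, d x * q x ^ (n-1)).toReal
        ≤ ((∑' x, d x * q x ^ n) + (n:ℝ≥0∞)⁻¹).toReal :=
          ENNReal.toReal_mono (ENNReal.add_ne_top.mpr ⟨hA_ne_top n, hinv_ne⟩) hle
      _ = (∑' x, d x * q x ^ n).toReal + 1 / n := by
          rw [ENNReal.toReal_add (hA_ne_top n) hinv_ne, ENNReal.toReal_inv,
            ENNReal.toReal_natCast, one_div]
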